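/- Let U ⊆ R^n be a proper nonempty open set. Define a dyadic n-cell to be a cube Π_k [2^{-t} a_k, 2^{-t}(a_k+1)] with t ∈ Z, a_k ∈ Z. Say an n-cell x is ε-small if its diameter (in the L^∞ metric) is at most ε and every dyadic n-cell of the same diameter intersecting x is contained in U; say x is ε-good if it is a maximal ε-small n-cell with respect to inclusion. Then the ε-good n-cells have pairwise disjoint interiors and their union equals U. -/

import Mathlib

open Metric

/- The metric on `Fin n → ℝ` is the sup (`L^∞`) metric. -/

/-- A dyadic `n`-cell in `ℝⁿ`. -/
def IsDyadicCell (n : ℕ) (x : Set (Fin n → ℝ)) : Prop :=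
  ∃ (t : ℤ) (a : Fin n → ℤ),
    x = Set.univ.pi fun k => Set.Icc ((2 : ℝ) ^ (-t) * a k) ((2 : ℝ) ^ (-t) * (a k + 1))

/-- An `ε`-small cell for the open set `U`: a dyadic cell of diameter at most `ε`
such that every dyadic cell of the same diameter intersecting it lies in `U`. -/
def IsSmallCell {n : ℕ} (U : Set (Fin n → ℝ)) (ε : ℝ) (x : Set (Fin n → ℝ)) : Prop :=
  IsDyadicCell n x ∧ Metric.diam x ≤ ε ∧
    ∀ y, IsDyadicCell n y → Metric.diam y = Metric.diam x → (x ∩ y).Nonempty → y ⊆ U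

/-- An `ε`-good cell: a maximal `ε`-small cell with respect to inclusion. -/
def IsGoodCell {n : ℕ} (U : Set (Fin n → ℝ)) (ε : ℝ) (x : Set (Fin n → ℝ)) : Prop :=
  IsSmallCell U ε x ∧ ∀ y, IsSmallCell U ε y → x ⊆ y → y = x

/-- The dyadic cell as a set. -/
def dcell (n : ℕ) (t : ℤ) (a : Fin n → ℤ) : Set (Fin n → ℝ) :=
  Set.univ.pi fun k => Set.Icc ((2 : ℝ) ^ (-t) * a k) ((2 : ℝ) ^ (-t) * (a k + 1))

lemma isDyadicCell_iff {n : ℕ} {x : Set (Fin n → ℝ)} :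
    IsDyadicCell n x ↔ ∃ (t : ℤ) (a : Fin n → ℤ), x = dcell n t a := Iff.rfl

lemma dcell_icc_le (t : ℤ) (a : ℤ) :
    ((2:ℝ)^(-t) * a) ≤ (2:ℝ)^(-t) * (a+1) := by
  have h : (0:ℝ) < (2:ℝ)^(-t) := by positivity
  nlinarith

lemma mem_dcell {n : ℕ} {t : ℤ} {a : Fin n → ℤ} {p : Fin n → ℝ} :
    p ∈ dcell n t a ↔ ∀ k, (2:ℝ)^(-t) * a k ≤ p k ∧ p k ≤ (2:ℝ)^(-t) * (a k + 1) := by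
  simp [dcell, Set.mem_univ_pi, Set.mem_Icc, Pi.le_def, forall_and]

lemma corner_mem_dcell {n : ℕ} (t : ℤ) (a : Fin n → ℤ) :
    (fun k => (2:ℝ)^(-t) * a k) ∈ dcell n t a := by
  rw [mem_dcell]; exact fun k => ⟨le_rfl, dcell_icc_le t (a k)⟩

lemma corner2_mem_dcell {n : ℕ} (t : ℤ) (a : Fin n → ℤ) :
    (fun k => (2:ℝ)^(-t) * (a k + 1)) ∈ dcell n t a := by
  rw [mem_dcell]; exact fun k => ⟨dcell_icc_le t (a k), le_rfl⟩

lemma isBounded_dcell {n : ℕ} (t : ℤ) (a : Fin n → ℤ) :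
    Bornology.IsBounded (dcell n t a) :=
  ((isCompact_univ_pi fun _ => isCompact_Icc).isBounded)

lemma diam_dcell {n : ℕ} (hn : 0 < n) (t : ℤ) (a : Fin n → ℤ) :
    Metric.diam (dcell n t a) = (2:ℝ)^(-t) := by
  have hpos : (0:ℝ) < (2:ℝ)^(-t) := by positivity
  apply le_antisymm
  · apply Metric.diam_le_of_forall_dist_le hpos.le
    intro x hx y hy
    rw [dist_pi_le_iff hpos.le]
    intro k
    rw [mem_dcell] at hx hy
    have := Real.dist_le_of_mem_Icc (Set.mem_Icc.2 (hx k)) (Set.mem_Icc.2 (hy k))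
    calc dist (x k) (y k) ≤ (2:ℝ)^(-t) * (a k + 1) - (2:ℝ)^(-t) * a k := this
      _ = (2:ℝ)^(-t) := by ring
  · have hd := Metric.dist_le_diam_of_mem (isBounded_dcell t a)
      (corner_mem_dcell t a) (corner2_mem_dcell t a)
    refine le_trans ?_ hd
    have k : Fin n := ⟨0, hn⟩
    have h := dist_le_pi_dist (fun k => (2:ℝ)^(-t) * a k) (fun k => (2:ℝ)^(-t) * (a k + 1)) k
    refine le_trans ?_ h
    rw [Real.dist_eq, abs_sub_comm, abs_of_nonneg (by nlinarith)]
    linarith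

lemma dcell_subset_iff {n : ℕ} {t s : ℤ} {a b : Fin n → ℤ} :
    dcell n t a ⊆ dcell n s b ↔ ∀ k,
      Set.Icc ((2:ℝ)^(-t) * a k) ((2:ℝ)^(-t) * (a k + 1)) ⊆
      Set.Icc ((2:ℝ)^(-s) * b k) ((2:ℝ)^(-s) * (b k + 1)) := by
  rw [dcell, dcell, Set.univ_pi_subset_univ_pi_iff]
  constructor
  · rintro (h | ⟨k, hk⟩)
    · exact h
    · exact absurd hk (Set.Nonempty.ne_empty ⟨_, Set.left_mem_Icc.2 (dcell_icc_le t (a k))⟩)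
  · exact Or.inl

lemma interior_dcell {n : ℕ} (t : ℤ) (a : Fin n → ℤ) :
    interior (dcell n t a) =
      Set.univ.pi fun k => Set.Ioo ((2:ℝ)^(-t) * a k) ((2:ℝ)^(-t) * (a k + 1)) := by
  rw [dcell, interior_pi_set Set.finite_univ]
  simp [interior_Icc]

lemma dyadic_Icc_subset {s t : ℤ} {a b : ℤ} (hst : s ≤ t) {x : ℝ}
    (h1 : (2:ℝ)^(-t) * a < x) (h2 : x < (2:ℝ)^(-t)*(a+1))
    (h3 : (2:ℝ)^(-s) * b < x) (h4 : x < (2:ℝ)^(-s)*(b+1)) :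
    Set.Icc ((2:ℝ)^(-t)*a) ((2:ℝ)^(-t)*(a+1)) ⊆ Set.Icc ((2:ℝ)^(-s)*b) ((2:ℝ)^(-s)*(b+1)) := by
  obtain ⟨m, rfl⟩ : ∃ m : ℕ, t = s + m := ⟨(t - s).toNat, by omega⟩
  have hpt : (0:ℝ) < (2:ℝ)^(-(s + m : ℤ)) := by positivity
  have hkey : (2:ℝ)^(-s) = (2:ℝ)^(-(s+m:ℤ)) * 2^m := by
    rw [← zpow_natCast (2:ℝ) m, ← zpow_add₀ (two_ne_zero)]
    ring_nf
  have hc1 : ((2^m * b : ℤ) : ℝ) < (a : ℝ) + 1 := by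
    have : (2:ℝ)^(-(s+m:ℤ)) * ((2^m * b : ℤ) : ℝ) < (2:ℝ)^(-(s+m:ℤ)) * ((a:ℝ)+1) := by
      push_cast
      calc (2:ℝ)^(-(s+m:ℤ)) * (2^m * b) = (2:ℝ)^(-s) * b := by rw [hkey]; ring
        _ < x := h3
        _ < _ := h2
    exact lt_of_mul_lt_mul_left this hpt.le
  have hc1' : (2^m * b : ℤ) ≤ a := by exact_mod_cast Int.lt_add_one_iff.mp (by exact_mod_cast hc1)
  have hc2 : (a : ℝ) < ((2^m * (b+1) : ℤ) : ℝ) := by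
    have : (2:ℝ)^(-(s+m:ℤ)) * (a:ℝ) < (2:ℝ)^(-(s+m:ℤ)) * ((2^m * (b+1) : ℤ) : ℝ) := by
      push_cast
      calc (2:ℝ)^(-(s+m:ℤ)) * a < x := h1
        _ < (2:ℝ)^(-s) * (b+1) := h4
        _ = (2:ℝ)^(-(s+m:ℤ)) * (2^m * (b+1)) := by rw [hkey]; ring
    exact lt_of_mul_lt_mul_left this hpt.le
  have hc2' : a + 1 ≤ 2^m * (b+1) := Int.add_one_le_iff.mpr (by exact_mod_cast hc2)
  apply Set.Icc_subset_Icc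
  · calc (2:ℝ)^(-s) * b = (2:ℝ)^(-(s+m:ℤ)) * ((2^m * b : ℤ):ℝ) := by push_cast; rw [hkey]; ring
      _ ≤ (2:ℝ)^(-(s+m:ℤ)) * a := by
          apply mul_le_mul_of_nonneg_left _ hpt.le; exact_mod_cast hc1'
  · calc (2:ℝ)^(-(s+m:ℤ)) * ((a:ℝ)+1) ≤ (2:ℝ)^(-(s+m:ℤ)) * ((2^m * (b+1) : ℤ):ℝ) := by
          apply mul_le_mul_of_nonneg_left _ hpt.le; exact_mod_cast hc2'
      _ = (2:ℝ)^(-s) * ((b:ℝ)+1) := by push_cast; rw [hkey]; ring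

lemma dyadic_Icc_subset_same {t : ℤ} {a b : ℤ}
    (h : Set.Icc ((2:ℝ)^(-t)*a) ((2:ℝ)^(-t)*(a+1)) ⊆ Set.Icc ((2:ℝ)^(-t)*b) ((2:ℝ)^(-t)*(b+1))) :
    a = b := by
  have hpos : (0:ℝ) < (2:ℝ)^(-t) := by positivity
  have hne : ((2:ℝ)^(-t)*a) ≤ (2:ℝ)^(-t)*(a+1) := by nlinarith
  rw [Set.Icc_subset_Icc_iff hne] at h
  have h1 : (b:ℝ) ≤ a := le_of_mul_le_mul_left h.1 hpos
  have h2 : (a:ℝ)+1 ≤ (b:ℝ)+1 := le_of_mul_le_mul_left h.2 hpos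
  have : (a:ℝ) = b := le_antisymm (by linarith) (by exact_mod_cast h1)
  exact_mod_cast this

lemma dyadic_scale_le {t s : ℤ} {a b : ℤ}
    (h : Set.Icc ((2:ℝ)^(-t)*a) ((2:ℝ)^(-t)*(a+1)) ⊆ Set.Icc ((2:ℝ)^(-s)*b) ((2:ℝ)^(-s)*(b+1))) :
    s ≤ t := by
  have hpos : (0:ℝ) < (2:ℝ)^(-t) := by positivity
  have hne : ((2:ℝ)^(-t)*a) ≤ (2:ℝ)^(-t)*(a+1) := by nlinarith
  rw [Set.Icc_subset_Icc_iff hne] at h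
  have hlen : (2:ℝ)^(-t) ≤ (2:ℝ)^(-s) := by nlinarith
  have := (zpow_le_zpow_iff_right₀ (a := (2:ℝ)) one_lt_two).mp hlen
  omega

lemma dyadic_pow_inj {t s : ℤ} (h : (2:ℝ)^(-t) = (2:ℝ)^(-s)) : t = s := by
  have := zpow_right_injective₀ (a := (2:ℝ)) (by norm_num) (by norm_num) h
  omega

lemma mem_floor_cell (t : ℤ) (p : ℝ) :
    (2:ℝ)^(-t) * (⌊(2:ℝ)^t * p⌋ : ℝ) ≤ p ∧ p ≤ (2:ℝ)^(-t) * ((⌊(2:ℝ)^t * p⌋ : ℝ) + 1) := by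
  have hpos : (0:ℝ) < (2:ℝ)^t := by positivity
  have hinv : (2:ℝ)^(-t) = ((2:ℝ)^t)⁻¹ := by rw [zpow_neg]
  constructor
  · rw [hinv, inv_mul_le_iff₀ hpos, mul_comm]
    exact Int.floor_le _
  · rw [hinv, le_inv_mul_iff₀ hpos, mul_comm]
    exact (Int.lt_floor_add_one _).le

lemma exists_small_zpow {c : ℝ} (hc : 0 < c) : ∃ t : ℤ, (2:ℝ)^(-t) < c := by
  obtain ⟨N, hN⟩ := exists_pow_lt_of_lt_one hc (by norm_num : (1/2 : ℝ) < 1)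
  refine ⟨N, ?_⟩
  have : ((1:ℝ)/2)^N = (2:ℝ)^(-(N:ℤ)) := by
    rw [zpow_neg, zpow_natCast]
    simp [div_pow]
  rwa [this] at hN

/-- If interiors of two dyadic cells meet, the finer one is contained in the coarser. -/
lemma dcell_subset_of_interior_inter {n : ℕ} {t s : ℤ} {a b : Fin n → ℤ} (hst : s ≤ t)
    {p : Fin n → ℝ} (hpx : p ∈ interior (dcell n t a)) (hpy : p ∈ interior (dcell n s b)) :
    dcell n t a ⊆ dcell n s b := by
  rw [interior_dcell, Set.mem_univ_pi] at hpx hpy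
  rw [dcell_subset_iff]
  intro k
  obtain ⟨h1, h2⟩ := hpx k
  obtain ⟨h3, h4⟩ := hpy k
  exact dyadic_Icc_subset hst h1 h2 h3 h4

theorem stmt11 (n : ℕ) (U : Set (Fin n → ℝ)) (hU : IsOpen U)
    (hne : U.Nonempty) (hproper : U ≠ Set.univ) (ε : ℝ) (hε : 0 < ε) :
    (∀ x y : Set (Fin n → ℝ), IsGoodCell U ε x → IsGoodCell U ε y → x ≠ y →
      interior x ∩ interior y = ∅) ∧
    ⋃₀ {x | IsGoodCell U ε x} = U := by
  rcases Nat.eq_zero_or_pos n with hn | hn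
  · subst hn
    obtain ⟨p, hp⟩ := hne
    exact absurd (Set.eq_univ_of_forall fun q => by rwa [Subsingleton.elim q p]) hproper
  constructor
  · -- disjoint interiors
    intro x y hx hy hxy
    rw [Set.eq_empty_iff_forall_notMem]
    rintro p ⟨hpx, hpy⟩
    obtain ⟨t, a, rfl⟩ := isDyadicCell_iff.mp hx.1.1
    obtain ⟨s, b, rfl⟩ := isDyadicCell_iff.mp hy.1.1
    rcases le_total s t with hst | hst
    · exact hxy ((hx.2 _ hy.1 (dcell_subset_of_interior_inter hst hpx hpy)).symm)
    · exact hxy (hy.2 _ hx.1 (dcell_subset_of_interior_inter hst hpy hpx))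
  · -- union equals U
    apply subset_antisymm
    · rintro p ⟨x, hx, hpx⟩
      exact hx.1.2.2 x hx.1.1 rfl ⟨p, hpx, hpx⟩ hpx
    · intro p hp
      obtain ⟨r, hr, hball⟩ := Metric.isOpen_iff.mp hU p hp
      -- a scale fine enough
      obtain ⟨t₁, ht₁⟩ := exists_small_zpow (lt_min hε (by linarith : (0:ℝ) < r/2))
      have ht₁ε : (2:ℝ)^(-t₁) < ε := lt_of_lt_of_le ht₁ (min_le_left _ _)
      have ht₁r : (2:ℝ)^(-t₁) < r/2 := lt_of_lt_of_le ht₁ (min_le_right _ _)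
      -- the predicate: exists a small cell at scale z containing p
      set P : ℤ → Prop := fun z => ∃ a : Fin n → ℤ,
        p ∈ dcell n z a ∧ IsSmallCell U ε (dcell n z a) with hP
      have hsmall_of : ∀ z : ℤ, (2:ℝ)^(-z) ≤ (2:ℝ)^(-t₁) →
          ∀ a : Fin n → ℤ, p ∈ dcell n z a → IsSmallCell U ε (dcell n z a) := by
        intro z hz a hpa
        refine ⟨⟨z, a, rfl⟩, ?_, ?_⟩
        · rw [diam_dcell hn]; linarith
        · rintro y hy hdiam ⟨q, hq1, hq2⟩ w hw
          obtain ⟨s, b, rfl⟩ := isDyadicCell_iff.mp hy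
          apply hball
          rw [Metric.mem_ball]
          rw [diam_dcell hn, diam_dcell hn] at hdiam
          have h1 : dist w q ≤ (2:ℝ)^(-z) := by
            have := Metric.dist_le_diam_of_mem (isBounded_dcell s b) hw hq2
            rwa [diam_dcell hn, hdiam] at this
          have h2 : dist q p ≤ (2:ℝ)^(-z) := by
            have := Metric.dist_le_diam_of_mem (isBounded_dcell z a) hq1 hpa
            rwa [diam_dcell hn] at this
          calc dist w p ≤ dist w q + dist q p := dist_triangle w q p
            _ ≤ (2:ℝ)^(-z) + (2:ℝ)^(-z) := add_le_add h1 h2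
            _ ≤ (2:ℝ)^(-t₁) + (2:ℝ)^(-t₁) := add_le_add hz hz
            _ < r := by linarith
      have hPne : ∃ z, P z := by
        refine ⟨t₁, fun k => ⌊(2:ℝ)^t₁ * p k⌋, ?_, ?_⟩
        · rw [mem_dcell]; exact fun k => mem_floor_cell t₁ (p k)
        · exact hsmall_of t₁ le_rfl _ (by rw [mem_dcell]; exact fun k => mem_floor_cell t₁ (p k))
      have hbdd : ∃ bd : ℤ, ∀ z : ℤ, P z → bd ≤ z := by
        obtain ⟨N, hN⟩ := exists_nat_gt ε
        refine ⟨-(N:ℤ), ?_⟩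
        rintro z ⟨a, hpa, hsm⟩
        have hd : (2:ℝ)^(-z) ≤ ε := by
          have := hsm.2.1; rwa [diam_dcell hn] at this
        have hN2 : (N:ℝ) ≤ (2:ℝ)^(N:ℤ) := by
          rw [zpow_natCast]
          exact_mod_cast (Nat.lt_two_pow_self (n := N)).le
        have : (2:ℝ)^(-z) < (2:ℝ)^(N:ℤ) := lt_of_le_of_lt hd (lt_of_lt_of_le hN hN2)
        have := (zpow_lt_zpow_iff_right₀ (a := (2:ℝ)) one_lt_two).mp this
        omega
      obtain ⟨t₀, ⟨a₀, hpa₀, hsm₀⟩, hleast⟩ := Int.exists_least_of_bdd hbdd hPne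
      refine ⟨dcell n t₀ a₀, ⟨hsm₀, ?_⟩, hpa₀⟩
      rintro y hy hsub
      obtain ⟨s, b, rfl⟩ := isDyadicCell_iff.mp hy.1
      rw [dcell_subset_iff] at hsub
      have hst : s ≤ t₀ := dyadic_scale_le (hsub ⟨0, hn⟩)
      have hpy : p ∈ dcell n s b := dcell_subset_iff.mpr hsub hpa₀
      rcases lt_or_eq_of_le hst with hlt | rfl
      · exact absurd (hleast s ⟨b, hpy, hy⟩) (by omega)
      · have hab : a₀ = b := funext fun k => dyadic_Icc_subset_same (hsub k)
        rw [hab]
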